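/- Let 𝓛 and 𝓐_un be linear endomorphisms of the space of d×d complex matrices such that 𝓐_un maps positive semidefinite matrices to positive semidefinite matrices. Let ρ_0 be a density matrix, let Δt > 0, c > 0 and M ∈ ℕ, and assume: exp(Δt·𝓛)(ρ_0) is a density matrix, ‖exp(Δt·𝓛)(ρ_0) − 𝓐_un(ρ_0)‖₁ ≤ c·Δt^{M+1}, and c·Δt^{M+1} ≤ 1/2. Then ‖exp(Δt·𝓛)(ρ_0) − 𝓐_un(ρ_0)/Tr(𝓐_un(ρ_0))‖₁ ≤ 4c·Δt^{M+1}. -/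

import Mathlib

open MeasureTheory Filter
open scoped Matrix ComplexOrder

attribute [local instance] Matrix.normedAddCommGroup Matrix.normedSpace

/-- Trace norm (Schatten-1 norm) of a complex matrix: `‖A‖₁ = Tr √(Aᴴ A)`. -/
noncomputable def traceNorm {d : ℕ} (A : Matrix (Fin d) (Fin d) ℂ) : ℝ :=
  (((Matrix.posSemidef_conjTranspose_mul_self A).1.eigenvectorUnitary : Matrix (Fin d) (Fin d) ℂ) *
    Matrix.diagonal ((fun x : ℝ => ((Real.sqrt x : ℝ) : ℂ)) ∘ (Matrix.posSemidef_conjTranspose_mul_self A).1.eigenvalues) *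
    (star (Matrix.posSemidef_conjTranspose_mul_self A).1.eigenvectorUnitary :
      Matrix (Fin d) (Fin d) ℂ)).trace.re

/-- Instance found automatically by the older library; supplied by hand here. -/
noncomputable instance matrixCLMIsTopologicalRing {d : ℕ} :
    IsTopologicalRing (Matrix (Fin d) (Fin d) ℂ →L[ℂ] Matrix (Fin d) (Fin d) ℂ) := by
  exact @NonUnitalSeminormedRing.toIsTopologicalRing _
    (ContinuousLinearMap.toSeminormedRing
      (E := Matrix (Fin d) (Fin d) ℂ) (𝕜 := ℂ)).toNonUnitalSeminormedRing

namespace TNAux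
variable {d : ℕ}

lemma trace_unitary_conj (U : Matrix.unitaryGroup (Fin d) ℂ)
    (D : Matrix (Fin d) (Fin d) ℂ) :
    ((U : Matrix (Fin d) (Fin d) ℂ) * D * star (U : Matrix (Fin d) (Fin d) ℂ)).trace
      = D.trace := by
  rw [Matrix.trace_mul_cycle]
  rw [show star (U : Matrix (Fin d) (Fin d) ℂ) * (U : Matrix (Fin d) (Fin d) ℂ) = 1 by
        simpa [← Unitary.coe_star] using Unitary.coe_star_mul_self U]
  rw [one_mul]

lemma traceNorm_eq_sum (X : Matrix (Fin d) (Fin d) ℂ) :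
    traceNorm X =
      ∑ i, Real.sqrt ((Matrix.posSemidef_conjTranspose_mul_self X).1.eigenvalues i) := by
  unfold traceNorm
  rw [trace_unitary_conj, Matrix.trace_diagonal]
  rw [Complex.re_sum]
  simp

lemma psd_diag_re_nonneg {A : Matrix (Fin d) (Fin d) ℂ} (hA : A.PosSemidef) (i : Fin d) :
    0 ≤ (A i i).re := by
  have h := hA.dotProduct_mulVec_nonneg (Pi.single i 1)
  rw [Complex.nonneg_iff] at h
  have : dotProduct (star (Pi.single i 1)) (A *ᵥ Pi.single i 1) = A i i := by
    simp [dotProduct, Pi.single_apply, Matrix.mulVec_single, apply_ite]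
  rw [this] at h
  exact h.1

lemma mul_conjTranspose_diag (M : Matrix (Fin d) (Fin d) ℂ) (i : Fin d) :
    ((M * Mᴴ) i i).re = ∑ k, Complex.normSq (M i k) := by
  rw [Matrix.mul_apply, Complex.re_sum]
  congr 1; ext k
  rw [Matrix.conjTranspose_apply]
  simp [Complex.star_def, Complex.mul_conj]

lemma conjTranspose_mul_diag (M : Matrix (Fin d) (Fin d) ℂ) (i : Fin d) :
    ((Mᴴ * M) i i).re = ∑ k, Complex.normSq (M k i) := by
  rw [Matrix.mul_apply, Complex.re_sum]
  congr 1; ext k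
  rw [Matrix.conjTranspose_apply, mul_comm]
  simp [Complex.star_def, Complex.mul_conj]

lemma key_bound (C X : Matrix (Fin d) (Fin d) ℂ)
    (hC : (1 - C * Cᴴ).PosSemidef) :
    ((C * X).trace).re ≤ traceNorm X := by
  classical
  set hH := Matrix.posSemidef_conjTranspose_mul_self X with hHdef
  set lam := hH.1.eigenvalues with hlamdef
  set V := (hH.1.eigenvectorUnitary : Matrix (Fin d) (Fin d) ℂ) with hVdef
  have hVV : V * star V = 1 := by
    simpa [hVdef, ← Unitary.coe_star] using Unitary.coe_mul_star_self hH.1.eigenvectorUnitary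
  have hVV' : star V * V = 1 := by
    simpa [hVdef, ← Unitary.coe_star] using Unitary.coe_star_mul_self hH.1.eigenvectorUnitary
  have hdiag : star V * (Xᴴ * X) * V = Matrix.diagonal (fun i => (lam i : ℂ)) := by
    have h := hH.1.conjStarAlgAut_star_eigenvectorUnitary
    simp only [Unitary.conjStarAlgAut_apply, Unitary.coe_star, star_star] at h
    exact h
  set M1 := star V * C with hM1def
  set M2 := X * V with hM2def
  -- rewrite the trace
  have htr : (C * X).trace = (M1 * M2).trace := by
    have : M1 * M2 = star V * (C * X) * V := by
      simp [hM1def, hM2def, Matrix.mul_assoc]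
    rw [this, Matrix.trace_mul_cycle, ← Matrix.mul_assoc, hVV, one_mul]
  -- column norm bounds
  have hf : ∀ i, (∑ k, Complex.normSq (M1 i k)) ≤ 1 := by
    intro i
    have hpsd : (1 - M1 * M1ᴴ).PosSemidef := by
      have h2 : Vᴴ * (1 - C * Cᴴ) * V = 1 - M1 * M1ᴴ := by
        have : M1ᴴ = Cᴴ * V := by
          simp [hM1def, Matrix.conjTranspose_mul, Matrix.star_eq_conjTranspose]
        rw [this, Matrix.mul_sub, Matrix.sub_mul, Matrix.mul_one,
          ← Matrix.star_eq_conjTranspose V, hVV']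
        simp [hM1def, Matrix.star_eq_conjTranspose, Matrix.mul_assoc]
      rw [← h2]
      exact hC.conjTranspose_mul_mul_same V
    have := psd_diag_re_nonneg hpsd i
    rw [Matrix.sub_apply, Complex.sub_re, Matrix.one_apply_eq] at this
    have h3 := mul_conjTranspose_diag M1 i
    simp only [Complex.one_re] at this
    linarith [h3 ▸ this]
  have hg : ∀ i, (∑ k, Complex.normSq (M2 k i)) = lam i := by
    intro i
    have h1 : M2ᴴ * M2 = Matrix.diagonal (fun i => (lam i : ℂ)) := by
      rw [← hdiag, hM2def, Matrix.conjTranspose_mul, ← Matrix.star_eq_conjTranspose V]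
      simp [Matrix.mul_assoc]
    have h2 := conjTranspose_mul_diag M2 i
    rw [h1] at h2
    rw [← h2, Matrix.diagonal_apply_eq]
    simp
  have hlam0 : ∀ i, 0 ≤ lam i := hH.eigenvalues_nonneg
  -- main estimate
  rw [htr]
  have hstep : ∀ i, ‖(M1 * M2) i i‖ ≤ Real.sqrt (lam i) := by
    intro i
    rw [Matrix.mul_apply]
    have hcs : (∑ k, ‖M1 i k‖ * ‖M2 k i‖) ^ 2 ≤
        (∑ k, Complex.normSq (M1 i k)) * ∑ k, Complex.normSq (M2 k i) := by
      refine Finset.sum_sq_le_sum_mul_sum_of_sq_eq_mul _ (fun _ _ => Complex.normSq_nonneg _)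
        (fun _ _ => Complex.normSq_nonneg _) (fun k _ => ?_)
      rw [mul_pow, Complex.sq_norm, Complex.sq_norm]
    have hsum_nonneg : 0 ≤ ∑ k, ‖M1 i k‖ * ‖M2 k i‖ :=
      Finset.sum_nonneg fun k _ => mul_nonneg (norm_nonneg _) (norm_nonneg _)
    calc ‖∑ k, M1 i k * M2 k i‖
        ≤ ∑ k, ‖M1 i k * M2 k i‖ := norm_sum_le _ _
      _ = ∑ k, ‖M1 i k‖ * ‖M2 k i‖ := by simp [map_mul]
      _ ≤ Real.sqrt (lam i) := by
          have h4 : (∑ k, ‖M1 i k‖ * ‖M2 k i‖) ^ 2 ≤ lam i := by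
            refine hcs.trans ?_
            rw [hg i]
            calc (∑ k, Complex.normSq (M1 i k)) * lam i ≤ 1 * lam i :=
                  mul_le_mul_of_nonneg_right (hf i) (hlam0 i)
              _ = lam i := one_mul _
          calc (∑ k, ‖M1 i k‖ * ‖M2 k i‖)
              = Real.sqrt ((∑ k, ‖M1 i k‖ * ‖M2 k i‖) ^ 2) :=
                (Real.sqrt_sq hsum_nonneg).symm
            _ ≤ Real.sqrt (lam i) := Real.sqrt_le_sqrt h4
  calc ((M1 * M2).trace).re ≤ ‖(M1 * M2).trace‖ := Complex.re_le_norm _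
    _ ≤ ∑ i, ‖(M1 * M2) i i‖ := by
        exact norm_sum_le _ _
    _ ≤ ∑ i, Real.sqrt (lam i) := Finset.sum_le_sum fun i _ => hstep i
    _ = traceNorm X := (traceNorm_eq_sum X).symm


lemma traceNorm_add_le (X Y : Matrix (Fin d) (Fin d) ℂ) :
    traceNorm (X + Y) ≤ traceNorm X + traceNorm Y := by
  classical
  set Z := X + Y with hZdef
  set hH := Matrix.posSemidef_conjTranspose_mul_self Z with hHdef
  set lam := hH.1.eigenvalues with hlamdef
  set V := (hH.1.eigenvectorUnitary : Matrix (Fin d) (Fin d) ℂ) with hVdef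
  have hlam0 : ∀ i, 0 ≤ lam i := hH.eigenvalues_nonneg
  have hVV : V * star V = 1 := by
    simpa [hVdef, ← Unitary.coe_star] using Unitary.coe_mul_star_self hH.1.eigenvectorUnitary
  have hVV' : star V * V = 1 := by
    simpa [hVdef, ← Unitary.coe_star] using Unitary.coe_star_mul_self hH.1.eigenvectorUnitary
  have hdiag : star V * (Zᴴ * Z) * V = Matrix.diagonal (fun i => (lam i : ℂ)) := by
    have h := hH.1.conjStarAlgAut_star_eigenvectorUnitary
    simp only [Unitary.conjStarAlgAut_apply, Unitary.coe_star, star_star] at h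
    exact h
  set E := Matrix.diagonal
      (fun i => if lam i = 0 then (0:ℂ) else ((Real.sqrt (lam i))⁻¹ : ℝ)) with hEdef
  set C := V * E * star V * Zᴴ with hCdef
  have hED : E * Matrix.diagonal (fun i => (lam i : ℂ))
      = Matrix.diagonal (fun i => (Real.sqrt (lam i) : ℂ)) := by
    rw [hEdef, Matrix.diagonal_mul_diagonal]
    refine congrArg Matrix.diagonal (funext fun i => ?_)
    by_cases h : lam i = 0
    · simp [h]
    · have hs : Real.sqrt (lam i) ≠ 0 :=
        ne_of_gt (Real.sqrt_pos.mpr (lt_of_le_of_ne (hlam0 i) (Ne.symm h)))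
      rw [if_neg h, ← Complex.ofReal_mul]
      congr 1
      rw [inv_mul_eq_div, div_eq_iff hs]
      exact (Real.mul_self_sqrt (hlam0 i)).symm
  have hCZ : C * Z = V * (E * Matrix.diagonal (fun i => (lam i : ℂ))) * star V := by
    calc C * Z = V * E * star V * (Zᴴ * Z) := by
          simp only [hCdef, Matrix.mul_assoc]
      _ = V * E * star V * (Zᴴ * Z) * (V * star V) := by rw [hVV, Matrix.mul_one]
      _ = V * (E * (star V * (Zᴴ * Z) * V)) * star V := by
          simp only [Matrix.mul_assoc]
      _ = V * (E * Matrix.diagonal (fun i => (lam i : ℂ))) * star V := by rw [hdiag]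
  have htrCZ : ((C * Z).trace).re = traceNorm Z := by
    rw [hCZ, hED, hVdef]
    rw [trace_unitary_conj hH.1.eigenvectorUnitary, Matrix.trace_diagonal]
    rw [traceNorm_eq_sum, Complex.re_sum]
    simp
    rfl
  have hEH : Eᴴ = E := by
    rw [hEdef, Matrix.diagonal_conjTranspose]
    refine congrArg Matrix.diagonal (funext fun i => ?_)
    by_cases h : lam i = 0 <;> simp [h, Pi.star_apply, Complex.star_def, Complex.conj_ofReal]
  have hEDE : E * Matrix.diagonal (fun i => (lam i : ℂ)) * E
      = Matrix.diagonal (fun i => if lam i = 0 then (0:ℂ) else 1) := by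
    rw [hED, hEdef, Matrix.diagonal_mul_diagonal]
    refine congrArg Matrix.diagonal (funext fun i => ?_)
    by_cases h : lam i = 0
    · simp [h]
    · have hs : Real.sqrt (lam i) ≠ 0 :=
        ne_of_gt (Real.sqrt_pos.mpr (lt_of_le_of_ne (hlam0 i) (Ne.symm h)))
      rw [if_neg h, if_neg h, ← Complex.ofReal_mul, mul_inv_cancel₀ hs, Complex.ofReal_one]
  have hCpsd : (1 - C * Cᴴ).PosSemidef := by
    have hCt : Cᴴ = Z * V * E * star V := by
      rw [hCdef]
      simp only [Matrix.star_eq_conjTranspose, Matrix.conjTranspose_mul,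
        Matrix.conjTranspose_conjTranspose, hEH, Matrix.mul_assoc]
    have hCC : C * Cᴴ = V * Matrix.diagonal (fun i => if lam i = 0 then (0:ℂ) else 1)
        * star V := by
      rw [hCt]
      calc C * (Z * V * E * star V)
          = V * E * (star V * (Zᴴ * Z) * V) * E * star V := by
            simp only [hCdef, Matrix.mul_assoc]
        _ = V * (E * Matrix.diagonal (fun i => (lam i : ℂ)) * E) * star V := by
            rw [hdiag]; simp only [Matrix.mul_assoc]
        _ = _ := by rw [hEDE]
    have h1 : (1 : Matrix (Fin d) (Fin d) ℂ)
        = V * Matrix.diagonal (fun _ => (1:ℂ)) * star V := by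
      rw [Matrix.diagonal_one, Matrix.mul_one, hVV]
    rw [hCC, h1, ← Matrix.sub_mul, ← Matrix.mul_sub, Matrix.diagonal_sub]
    have hps : (Matrix.diagonal
        (fun i => (1:ℂ) - if lam i = 0 then (0:ℂ) else 1)).PosSemidef := by
      refine Matrix.posSemidef_diagonal_iff.mpr fun i => ?_
      by_cases h : lam i = 0 <;> simp [h]
    have := hps.mul_mul_conjTranspose_same V
    rwa [← Matrix.star_eq_conjTranspose] at this
  have hsplit : (C * Z).trace = (C * X).trace + (C * Y).trace := by
    rw [hZdef, Matrix.mul_add, Matrix.trace_add]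
  calc traceNorm Z = ((C * Z).trace).re := htrCZ.symm
    _ = ((C * X).trace).re + ((C * Y).trace).re := by rw [hsplit, Complex.add_re]
    _ ≤ traceNorm X + traceNorm Y :=
        add_le_add (key_bound C X hCpsd) (key_bound C Y hCpsd)


lemma traceNorm_eq_cfc (X : Matrix (Fin d) (Fin d) ℂ) :
    traceNorm X = (cfc Real.sqrt (Xᴴ * X)).trace.re := by
  rw [(Matrix.posSemidef_conjTranspose_mul_self X).1.cfc_eq, Matrix.IsHermitian.cfc,
    Unitary.conjStarAlgAut_apply]
  rfl

lemma traceNorm_psd {P : Matrix (Fin d) (Fin d) ℂ} (hP : P.PosSemidef) :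
    traceNorm P = P.trace.re := by
  have hsq : P ^ 2 = Pᴴ * P := by rw [pow_two, hP.1]
  have hsa : IsSelfAdjoint P := hP.1
  have hcongr : cfc (fun x : ℝ => Real.sqrt (x ^ 2)) P = cfc (fun x : ℝ => x) P := by
    apply cfc_congr
    intro x hx
    rw [hP.1.spectrum_real_eq_range_eigenvalues] at hx
    obtain ⟨i, rfl⟩ := hx
    exact Real.sqrt_sq (hP.eigenvalues_nonneg i)
  rw [traceNorm_eq_cfc, ← hsq, ← cfc_comp_pow Real.sqrt 2 P, hcongr, cfc_id' ℝ P]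

lemma traceNorm_smul (c : ℂ) (X : Matrix (Fin d) (Fin d) ℂ) :
    traceNorm (c • X) = ‖c‖ * traceNorm X := by
  set hH := Matrix.posSemidef_conjTranspose_mul_self X with hHdef
  have hmat : (c • X)ᴴ * (c • X) = ((‖c‖ ^ 2 : ℝ) : ℂ) • (Xᴴ * X) := by
    rw [Matrix.conjTranspose_smul, Matrix.smul_mul, Matrix.mul_smul, smul_smul]
    congr 1
    rw [Complex.star_def, ← Complex.normSq_eq_conj_mul_self]
    norm_cast
    rw [Complex.normSq_eq_norm_sq]
  have hreal : ((‖c‖ ^ 2 : ℝ) : ℂ) • (Xᴴ * X) = (‖c‖ ^ 2 : ℝ) • (Xᴴ * X) := by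
    exact algebraMap_smul ℂ (‖c‖ ^ 2 : ℝ) (Xᴴ * X)
  have hcongr : cfc (fun x : ℝ => Real.sqrt (‖c‖ ^ 2 * x)) (Xᴴ * X)
      = cfc (fun x : ℝ => ‖c‖ * Real.sqrt x) (Xᴴ * X) := by
    apply cfc_congr
    intro x _
    show Real.sqrt (‖c‖ ^ 2 * x) = ‖c‖ * Real.sqrt x
    rw [Real.sqrt_mul (sq_nonneg ‖c‖) x, Real.sqrt_sq (norm_nonneg _)]
  have h2 : cfc Real.sqrt (((‖c‖ ^ 2 : ℝ) : ℂ) • (Xᴴ * X))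
      = cfc (fun x : ℝ => Real.sqrt (‖c‖ ^ 2 * x)) (Xᴴ * X) := by
    refine Eq.trans ?_
      (cfc_comp_const_mul (‖c‖ ^ 2) Real.sqrt (Xᴴ * X) Real.continuous_sqrt.continuousOn hH.1).symm
    exact congrArg (cfc Real.sqrt) hreal
  rw [traceNorm_eq_cfc, traceNorm_eq_cfc, hmat, h2, hcongr, cfc_const_mul ‖c‖ Real.sqrt (Xᴴ * X) Real.continuous_sqrt.continuousOn,
    Matrix.trace_smul, Complex.smul_re, smul_eq_mul]

lemma abs_re_trace_le (X : Matrix (Fin d) (Fin d) ℂ) :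
    |(X.trace).re| ≤ traceNorm X := by
  rcases abs_cases (X.trace).re with ⟨h, _⟩ | ⟨h, _⟩ <;> rw [h]
  · have := key_bound 1 X (by simp [Matrix.PosSemidef.zero])
    rwa [one_mul] at this
  · have := key_bound (-1) X ?_
    · rw [Matrix.neg_mul, one_mul, Matrix.trace_neg, Complex.neg_re] at this
      exact this
    · have : (1 : Matrix (Fin d) (Fin d) ℂ) - (-1) * (-1)ᴴ = 0 := by
        simp
      rw [this]
      exact Matrix.PosSemidef.zero

lemma psd_diag_nonneg {A : Matrix (Fin d) (Fin d) ℂ} (hA : A.PosSemidef) (i : Fin d) :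
    0 ≤ A i i := by
  have h := hA.dotProduct_mulVec_nonneg (Pi.single i 1)
  have heq : dotProduct (star (Pi.single i 1)) (A *ᵥ Pi.single i 1) = A i i := by
    simp [dotProduct, Pi.single_apply, Matrix.mulVec_single, apply_ite]
  rwa [heq] at h

lemma psd_trace_nonneg {A : Matrix (Fin d) (Fin d) ℂ} (hA : A.PosSemidef) :
    0 ≤ A.trace := by
  rw [Matrix.trace]
  exact Finset.sum_nonneg fun i _ => psd_diag_nonneg hA i

end TNAux

/-- One-step normalization error (Lemma 6, first part, of the paper): if the
positivity-preserving linear scheme `𝓐_un` is within `c Δt^{M+1} ≤ 1/2` of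
`exp(Δt 𝓛)` at the density matrix `ρ_0`, then the normalized output
`𝓐_un(ρ_0)/Tr(𝓐_un(ρ_0))` is within `4 c Δt^{M+1}` of `exp(Δt 𝓛)(ρ_0)`. -/
theorem normalization_error {d : ℕ} (hd : 1 ≤ d)
    (𝓛 : Matrix (Fin d) (Fin d) ℂ →L[ℂ] Matrix (Fin d) (Fin d) ℂ)
    (𝓐un : Matrix (Fin d) (Fin d) ℂ →ₗ[ℂ] Matrix (Fin d) (Fin d) ℂ)
    (hpres : ∀ ρ : Matrix (Fin d) (Fin d) ℂ, ρ.PosSemidef → (𝓐un ρ).PosSemidef)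
    (ρ0 : Matrix (Fin d) (Fin d) ℂ) (hρ0 : ρ0.PosSemidef) (hρ0tr : ρ0.trace = 1)
    (Δt c : ℝ) (M : ℕ) (hΔt : 0 < Δt) (hc : 0 < c)
    (hexp_pos : ((NormedSpace.exp ((Δt : ℂ) • 𝓛)) ρ0).PosSemidef)
    (hexp_tr : ((NormedSpace.exp ((Δt : ℂ) • 𝓛)) ρ0).trace = 1)
    (herr : traceNorm ((NormedSpace.exp ((Δt : ℂ) • 𝓛)) ρ0 - 𝓐un ρ0)
      ≤ c * Δt ^ (M + 1))
    (hsmall : c * Δt ^ (M + 1) ≤ 1 / 2) :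
    traceNorm ((NormedSpace.exp ((Δt : ℂ) • 𝓛)) ρ0
        - ((𝓐un ρ0).trace)⁻¹ • 𝓐un ρ0)
      ≤ 4 * c * Δt ^ (M + 1) := by
  classical
  set σ := (NormedSpace.exp ((Δt : ℂ) • 𝓛)) ρ0 with hσdef
  set A := 𝓐un ρ0 with hAdef
  have hApsd : A.PosSemidef := hpres ρ0 hρ0
  set ε := c * Δt ^ (M + 1) with hεdef
  have hεpos : 0 < ε := by positivity
  obtain ⟨hre, him⟩ := Complex.nonneg_iff.mp (TNAux.psd_trace_nonneg hApsd)
  set r := A.trace.re with hrdef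
  have htA : A.trace = (r : ℂ) := by
    apply Complex.ext <;> simp [hrdef, him]
  have h1 : |1 - r| ≤ ε := by
    have h := TNAux.abs_re_trace_le (σ - A)
    rw [Matrix.trace_sub, Complex.sub_re, hexp_tr] at h
    simp only [Complex.one_re] at h
    exact h.trans herr
  have hr_lb : (1:ℝ)/2 ≤ r := by
    have h2 : 1 - r ≤ |1 - r| := le_abs_self _
    linarith
  have hrpos : 0 < r := by linarith
  have hrne : r ≠ 0 := ne_of_gt hrpos
  have hdecomp : σ - (A.trace)⁻¹ • A = (σ - A) + (1 - (A.trace)⁻¹) • A := by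
    rw [sub_smul, one_smul]
    abel
  rw [hdecomp]
  have hnorm : ‖(1:ℂ) - (A.trace)⁻¹‖ * r = |r - 1| := by
    rw [htA]
    have : (1:ℂ) - ((r:ℂ))⁻¹ = (((1 - r⁻¹ : ℝ)):ℂ) := by push_cast; ring
    rw [this, Complex.norm_real, Real.norm_eq_abs]
    calc |1 - r⁻¹| * r = |(1 - r⁻¹) * r| := by
          rw [abs_mul, abs_of_pos hrpos]
      _ = |r - 1| := by
          congr 1
          field_simp
  calc traceNorm ((σ - A) + (1 - (A.trace)⁻¹) • A)
      ≤ traceNorm (σ - A) + traceNorm ((1 - (A.trace)⁻¹) • A) :=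
        TNAux.traceNorm_add_le _ _
    _ = traceNorm (σ - A) + ‖(1:ℂ) - (A.trace)⁻¹‖ * r := by
        rw [TNAux.traceNorm_smul, TNAux.traceNorm_psd hApsd]
    _ ≤ ε + |r - 1| := by
        rw [hnorm]
        exact add_le_add herr le_rfl
    _ ≤ ε + ε := by
        have : |r - 1| = |1 - r| := abs_sub_comm r 1
        rw [this]
        exact add_le_add le_rfl h1
    _ ≤ 4 * c * Δt ^ (M + 1) := by
        rw [hεdef] at *
        linarith
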